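/- arXiv:2004.12061 — 3 statements merged into one kernel-verified Lean document; each statement's English description precedes it below -/
import Mathlib

section
/- Let Ω ⊆ ℝⁿ be a nonempty compact convex set, f : ℝⁿ → ℝᵍ continuously differentiable on Ω, and G ∈ ℝ^{n×g}. Define Ξ(x) := G · Df(x) ∈ ℝ^{n×n}, γ̄ := max_{x ∈ Ω} λ_max(½(Ξ(x) + Ξ(x)ᵀ)) and γ̲ := min_{x ∈ Ω} λ_min(½(Ξ(x) + Ξ(x)ᵀ)). Then for all x, x̂ ∈ Ω: γ̲·‖x - x̂‖₂² ≤ ⟨G(f(x) - f(x̂)), x - x̂⟩ ≤ γ̄·‖x - x̂‖₂². -/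
/-- The symmetric part `½(M + Mᵀ)` of a real square matrix. -/
noncomputable def symPart {n : ℕ} (M : Matrix (Fin n) (Fin n) ℝ) : Matrix (Fin n) (Fin n) ℝ :=
  ((1:ℝ)/2) • (M + M.transpose)

lemma symPart_isHermitian {n : ℕ} (M : Matrix (Fin n) (Fin n) ℝ) :
    (symPart M).IsHermitian := by
  show (symPart M).conjTranspose = symPart M
  refine Matrix.ext fun i j => ?_
  simp only [symPart, Matrix.conjTranspose_apply, Matrix.smul_apply, Matrix.add_apply,
    Matrix.transpose_apply, star_trivial, smul_eq_mul]
  ring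


lemma rayleigh_bounds {n : ℕ} {A : Matrix (Fin n) (Fin n) ℝ} (hA : A.IsHermitian)
    (v : Fin n → ℝ) :
    (⨅ i, hA.eigenvalues i) * (∑ j, v j ^ 2) ≤ ∑ i, A.mulVec v i * v i ∧
    ∑ i, A.mulVec v i * v i ≤ (⨆ i, hA.eigenvalues i) * (∑ j, v j ^ 2) := by
  rcases Nat.eq_zero_or_pos n with h0 | hpos
  · subst h0
    simp [iInf, iSup, Set.range_eq_empty, Real.sInf_empty, Real.sSup_empty]
  haveI : Nonempty (Fin n) := Fin.pos_iff_nonempty.mp hpos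
  set b := hA.eigenvectorBasis with hb
  let v' : EuclideanSpace ℝ (Fin n) := WithLp.toLp 2 v
  let Av : EuclideanSpace ℝ (Fin n) := WithLp.toLp 2 (A.mulVec v)
  set w : Fin n → ℝ := fun i => dotProduct (b i : Fin n → ℝ) v with hw
  have hsym : ∀ p q, A p q = A q p := by
    intro p q
    have := congrFun (congrFun hA.eq q) p
    simpa using this
  have h2 : ∀ (u : Fin n → ℝ), dotProduct u (A.mulVec v)
      = dotProduct (A.mulVec u) v := by
    intro u
    simp only [dotProduct, Matrix.mulVec, Finset.mul_sum, Finset.sum_mul]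
    rw [Finset.sum_comm]
    refine Finset.sum_congr rfl fun p _ => Finset.sum_congr rfl fun q _ => ?_
    rw [hsym q p]; ring
  have hkey : ∀ i, dotProduct (A.mulVec v) (b i)
      = hA.eigenvalues i * w i := by
    intro i
    have h3 : A.mulVec (b i) = hA.eigenvalues i • (fun j => b i j) :=
      hA.mulVec_eigenvectorBasis i
    rw [dotProduct_comm, h2 (b i), h3, smul_dotProduct]
    rfl
  have key1 : ∑ i, A.mulVec v i * v i = ∑ i, hA.eigenvalues i * w i ^ 2 := by
    have hpar := b.sum_inner_mul_inner Av v'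
    have hlhs : @inner ℝ _ _ Av v' = ∑ i, A.mulVec v i * v i := by
      simp [PiLp.inner_apply, Av, v', mul_comm]
    rw [hlhs] at hpar
    rw [← hpar]
    refine Finset.sum_congr rfl fun i _ => ?_
    have e1 : @inner ℝ _ _ Av (b i) = dotProduct (A.mulVec v) (b i) := by
      simp [PiLp.inner_apply, Av, dotProduct, mul_comm]
    have e2 : @inner ℝ _ _ (b i) v' = w i := by
      simp [PiLp.inner_apply, v', hw, dotProduct, mul_comm]
    rw [e1, e2, hkey i]; ring
  have key2 : ∑ j, v j ^ 2 = ∑ i, w i ^ 2 := by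
    have hpar := b.sum_inner_mul_inner v' v'
    have hlhs : @inner ℝ _ _ v' v' = ∑ j, v j ^ 2 := by
      rw [PiLp.inner_apply]; simp [sq, v']
    rw [hlhs] at hpar
    rw [← hpar]
    refine Finset.sum_congr rfl fun i _ => ?_
    have e1 : @inner ℝ _ _ v' (b i) = w i := by
      simp [PiLp.inner_apply, v', hw, dotProduct, mul_comm]
    have e2 : @inner ℝ _ _ (b i) v' = w i := by
      simp [PiLp.inner_apply, v', hw, dotProduct, mul_comm]
    rw [e1, e2]; ring
  have hbdd : BddAbove (Set.range hA.eigenvalues) := (Set.finite_range _).bddAbove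
  have hbdd' : BddBelow (Set.range hA.eigenvalues) := (Set.finite_range _).bddBelow
  constructor
  · rw [key1, key2, Finset.mul_sum]
    refine Finset.sum_le_sum fun i _ => ?_
    exact mul_le_mul_of_nonneg_right (ciInf_le hbdd' i) (sq_nonneg _)
  · rw [key1, key2, Finset.mul_sum]
    refine Finset.sum_le_sum fun i _ => ?_
    exact mul_le_mul_of_nonneg_right (le_ciSup hbdd i) (sq_nonneg _)


lemma quad_symPart' {n : ℕ} (M : Matrix (Fin n) (Fin n) ℝ) (v : Fin n → ℝ) :
    ∑ i, (((1:ℝ)/2) • (M + M.transpose)).mulVec v i * v i = ∑ i, M.mulVec v i * v i := by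
  simp only [Matrix.mulVec, dotProduct, Matrix.smul_apply, Matrix.add_apply,
    Matrix.transpose_apply, smul_eq_mul, Finset.sum_mul]
  have swap : ∑ i : Fin n, ∑ j : Fin n, (1:ℝ)/2 * (M j i * v j * v i)
      = ∑ i : Fin n, ∑ j : Fin n, (1:ℝ)/2 * (M i j * v j * v i) := by
    rw [Finset.sum_comm]
    exact Finset.sum_congr rfl fun i _ => Finset.sum_congr rfl fun j _ => by ring
  calc ∑ i : Fin n, ∑ j : Fin n, (1:ℝ)/2 * (M i j + M j i) * v j * v i
      = ∑ i : Fin n, ∑ j : Fin n, ((1:ℝ)/2 * (M i j * v j * v i)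
          + (1:ℝ)/2 * (M j i * v j * v i)) :=
        Finset.sum_congr rfl fun i _ => Finset.sum_congr rfl fun j _ => by ring
    _ = (∑ i : Fin n, ∑ j : Fin n, (1:ℝ)/2 * (M i j * v j * v i))
          + ∑ i : Fin n, ∑ j : Fin n, (1:ℝ)/2 * (M j i * v j * v i) := by
        simp [Finset.sum_add_distrib]
    _ = ∑ i : Fin n, ∑ j : Fin n, ((1:ℝ)/2 * (M i j * v j * v i)
          + (1:ℝ)/2 * (M i j * v j * v i)) := by
        rw [swap, ← Finset.sum_add_distrib]
        exact Finset.sum_congr rfl fun i _ => (Finset.sum_add_distrib).symm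
    _ = ∑ i : Fin n, ∑ j : Fin n, M i j * v j * v i :=
        Finset.sum_congr rfl fun i _ => Finset.sum_congr rfl fun j _ => by ring

/-- One-sided Lipschitz bounds via extreme eigenvalues of the symmetrized matrix
`½(Ξ(x) + Ξ(x)ᵀ)` with `Ξ(x) = G · Df(x)`: with `γ̄` the maximum over `Ω` of the largest
eigenvalue and `γ̲` the minimum over `Ω` of the smallest eigenvalue, one has
`γ̲‖x - x̂‖² ≤ ⟨G(f(x) - f(x̂)), x - x̂⟩ ≤ γ̄‖x - x̂‖²` on `Ω`. -/
theorem stmt_5 {n g : ℕ} (Ω : Set (Fin n → ℝ)) (hne : Ω.Nonempty)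
    (hcomp : IsCompact Ω) (hConv : Convex ℝ Ω)
    (f : (Fin n → ℝ) → Fin g → ℝ) (hf : ContDiffOn ℝ 1 f Ω)
    (G : Matrix (Fin n) (Fin g) ℝ)
    (Ξ : (Fin n → ℝ) → Matrix (Fin n) (Fin n) ℝ)
    (hΞ : ∀ x i j, Ξ x i j = ∑ k, G i k * fderivWithin ℝ f Ω x (Pi.single j 1) k)
    (γub γlb : ℝ)
    (hub : IsGreatest ((fun x => ⨆ i, (symPart_isHermitian (Ξ x)).eigenvalues i) '' Ω) γub)
    (hlb : IsLeast ((fun x => ⨅ i, (symPart_isHermitian (Ξ x)).eigenvalues i) '' Ω) γlb) :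
    ∀ x ∈ Ω, ∀ xh ∈ Ω,
      γlb * (∑ j, (x j - xh j)^2) ≤
          ∑ i, (∑ k, G i k * (f x k - f xh k)) * (x i - xh i) ∧
      ∑ i, (∑ k, G i k * (f x k - f xh k)) * (x i - xh i) ≤
          γub * (∑ j, (x j - xh j)^2) := by
  intro x hx xh hxh
  classical
  set u : Fin n → ℝ := fun i => x i - xh i with hu
  set c : ℝ → (Fin n → ℝ) := fun t => xh + t • u with hc
  have hc1 : c 1 = x := by funext i; simp [hc, hu]
  have hc0 : c 0 = xh := by funext i; simp [hc]
  have hcmem : ∀ t ∈ Set.Icc (0:ℝ) 1, c t ∈ Ω := by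
    intro t ht
    have h := hConv hxh hx (by linarith [ht.2] : (0:ℝ) ≤ 1 - t) ht.1 (by ring)
    have : c t = (1 - t) • xh + t • x := by
      funext i
      simp only [hc, hu, Pi.add_apply, Pi.smul_apply, smul_eq_mul]
      ring
    rwa [this]
  -- derivative of f along the segment
  have hder : ∀ t ∈ Set.Icc (0:ℝ) 1, HasDerivWithinAt (fun s => f (c s))
      (fderivWithin ℝ f Ω (c t) u) (Set.Icc 0 1) t := by
    intro t ht
    have hdf : HasFDerivWithinAt f (fderivWithin ℝ f Ω (c t)) Ω (c t) :=
      ((hf.differentiableOn one_ne_zero) (c t) (hcmem t ht)).hasFDerivWithinAt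
    have hline : HasDerivWithinAt c u (Set.Icc 0 1) t := by
      have h1 : HasDerivAt (fun s : ℝ => xh + s • u) u t := by
        simpa using ((hasDerivAt_id t).smul_const u).const_add xh
      exact h1.hasDerivWithinAt
    exact hdf.comp_hasDerivWithinAt t hline (fun s hs => hcmem s hs)
  -- linear maps evaluated at u via single-coordinate values
  have hDu : ∀ (L : (Fin n → ℝ) →L[ℝ] (Fin g → ℝ)) (k : Fin g),
      L u k = ∑ j, u j * L (Pi.single j 1) k := by
    intro L k
    have husum : u = ∑ j, u j • (Pi.single j (1:ℝ) : Fin n → ℝ) := by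
      funext m
      simp [Finset.sum_apply, Pi.single_apply]
    conv_lhs => rw [husum]
    rw [map_sum]
    simp [Finset.sum_apply]
  set φ : ℝ → ℝ := fun t => ∑ i, (∑ k, G i k * f (c t) k) * u i with hφdef
  set q : ℝ → ℝ := fun t => ∑ i, (Ξ (c t)).mulVec u i * u i with hqdef
  have hφ : ∀ t ∈ Set.Icc (0:ℝ) 1, HasDerivWithinAt φ (q t) (Set.Icc 0 1) t := by
    intro t ht
    have hint := hder t ht
    have hco : ∀ k : Fin g, HasDerivWithinAt (fun s => f (c s) k)
        (fderivWithin ℝ f Ω (c t) u k) (Set.Icc 0 1) t :=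
      fun k => hasDerivWithinAt_pi.1 hint k
    have hmain : HasDerivWithinAt φ
        (∑ i, (∑ k, G i k * fderivWithin ℝ f Ω (c t) u k) * u i) (Set.Icc 0 1) t := by
      refine HasDerivWithinAt.fun_sum fun i _ => ?_
      exact (HasDerivWithinAt.fun_sum fun k _ => (hco k).const_mul (G i k)).mul_const (u i)
    have heq : ∑ i, (∑ k, G i k * fderivWithin ℝ f Ω (c t) u k) * u i = q t := by
      simp only [hqdef, Matrix.mulVec, dotProduct]
      refine Finset.sum_congr rfl fun i _ => ?_
      congr 1
      have : ∀ j, Ξ (c t) i j * u j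
          = ∑ k, G i k * fderivWithin ℝ f Ω (c t) (Pi.single j 1) k * u j := by
        intro j; rw [hΞ]; rw [Finset.sum_mul]
      rw [Finset.sum_congr rfl fun j _ => this j, Finset.sum_comm]
      refine Finset.sum_congr rfl fun k _ => ?_
      rw [hDu, Finset.mul_sum]
      exact Finset.sum_congr rfl fun j _ => by ring
    rwa [heq] at hmain
  -- pointwise bounds on q
  have hsq : (0:ℝ) ≤ ∑ j, u j ^ 2 := Finset.sum_nonneg fun j _ => sq_nonneg _
  have hq_ub : ∀ t ∈ Set.Icc (0:ℝ) 1, q t ≤ γub * ∑ j, u j ^ 2 := by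
    intro t ht
    have hmem := hcmem t ht
    have hray := (rayleigh_bounds (symPart_isHermitian (Ξ (c t))) u).2
    have hquad := quad_symPart' (Ξ (c t)) u
    have hsup : (⨆ i, (symPart_isHermitian (Ξ (c t))).eigenvalues i) ≤ γub :=
      hub.2 ⟨c t, hmem, rfl⟩
    calc q t = ∑ i, (symPart (Ξ (c t))).mulVec u i * u i := by
          rw [hqdef]; exact (hquad).symm
      _ ≤ (⨆ i, (symPart_isHermitian (Ξ (c t))).eigenvalues i) * ∑ j, u j ^ 2 := hray
      _ ≤ γub * ∑ j, u j ^ 2 := mul_le_mul_of_nonneg_right hsup hsq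
  have hq_lb : ∀ t ∈ Set.Icc (0:ℝ) 1, γlb * ∑ j, u j ^ 2 ≤ q t := by
    intro t ht
    have hmem := hcmem t ht
    have hray := (rayleigh_bounds (symPart_isHermitian (Ξ (c t))) u).1
    have hquad := quad_symPart' (Ξ (c t)) u
    have hinf : γlb ≤ ⨅ i, (symPart_isHermitian (Ξ (c t))).eigenvalues i :=
      hlb.2 ⟨c t, hmem, rfl⟩
    calc γlb * ∑ j, u j ^ 2
        ≤ (⨅ i, (symPart_isHermitian (Ξ (c t))).eigenvalues i) * ∑ j, u j ^ 2 :=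
          mul_le_mul_of_nonneg_right hinf hsq
      _ ≤ ∑ i, (symPart (Ξ (c t))).mulVec u i * u i := hray
      _ = q t := by rw [hqdef]; exact hquad
  -- mean value: monotonicity of auxiliary functions
  have hIcc : Convex ℝ (Set.Icc (0:ℝ) 1) := convex_Icc 0 1
  have h01 : (0:ℝ) ∈ Set.Icc (0:ℝ) 1 := Set.left_mem_Icc.2 zero_le_one
  have h11 : (1:ℝ) ∈ Set.Icc (0:ℝ) 1 := Set.right_mem_Icc.2 zero_le_one
  have hintsub : interior (Set.Icc (0:ℝ) 1) ⊆ Set.Icc 0 1 := interior_subset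
  have hφcont : ContinuousOn φ (Set.Icc (0:ℝ) 1) :=
    fun t ht => (hφ t ht).continuousWithinAt
  have hub' : φ 1 - φ 0 ≤ γub * ∑ j, u j ^ 2 := by
    have hmono : MonotoneOn (fun t => γub * (∑ j, u j ^ 2) * t - φ t) (Set.Icc (0:ℝ) 1) := by
      refine monotoneOn_of_hasDerivWithinAt_nonneg hIcc
        (ContinuousOn.sub ((continuous_const.mul continuous_id).continuousOn) hφcont)
        (f' := fun t => γub * (∑ j, u j ^ 2) - q t) (fun t ht => ?_) (fun t ht => ?_)
      · have h1 : HasDerivWithinAt (fun t : ℝ => γub * (∑ j, u j ^ 2) * t)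
            (γub * (∑ j, u j ^ 2)) (interior (Set.Icc (0:ℝ) 1)) t := by
          simpa using ((hasDerivAt_id t).const_mul (γub * (∑ j, u j ^ 2))).hasDerivWithinAt
        exact h1.sub ((hφ t (hintsub ht)).mono hintsub)
      · show 0 ≤ γub * (∑ j, u j ^ 2) - q t
        have := hq_ub t (hintsub ht); linarith
    have := hmono h01 h11 zero_le_one
    simp only [mul_zero, mul_one] at this
    linarith
  have hlb' : γlb * ∑ j, u j ^ 2 ≤ φ 1 - φ 0 := by
    have hmono : MonotoneOn (fun t => φ t - γlb * (∑ j, u j ^ 2) * t) (Set.Icc (0:ℝ) 1) := by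
      refine monotoneOn_of_hasDerivWithinAt_nonneg hIcc
        (ContinuousOn.sub hφcont ((continuous_const.mul continuous_id).continuousOn))
        (f' := fun t => q t - γlb * (∑ j, u j ^ 2)) (fun t ht => ?_) (fun t ht => ?_)
      · have h1 : HasDerivWithinAt (fun t : ℝ => γlb * (∑ j, u j ^ 2) * t)
            (γlb * (∑ j, u j ^ 2)) (interior (Set.Icc (0:ℝ) 1)) t := by
          simpa using ((hasDerivAt_id t).const_mul (γlb * (∑ j, u j ^ 2))).hasDerivWithinAt
        exact ((hφ t (hintsub ht)).mono hintsub).sub h1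
      · show 0 ≤ q t - γlb * (∑ j, u j ^ 2)
        have := hq_lb t (hintsub ht); linarith
    have := hmono h01 h11 zero_le_one
    simp only [mul_zero, mul_one] at this
    linarith
  -- assemble
  have hdiff : φ 1 - φ 0 = ∑ i, (∑ k, G i k * (f x k - f xh k)) * (x i - xh i) := by
    simp only [hφdef, hc1, hc0]
    rw [← Finset.sum_sub_distrib]
    refine Finset.sum_congr rfl fun i _ => ?_
    rw [← sub_mul, ← Finset.sum_sub_distrib]
    have : ∀ k, G i k * f x k - G i k * f xh k = G i k * (f x k - f xh k) := fun k => by ring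
    rw [Finset.sum_congr rfl fun k _ => this k]
  have husq : ∑ j, u j ^ 2 = ∑ j, (x j - xh j) ^ 2 := rfl
  rw [← hdiff, ← husq]
  exact ⟨hlb', hub'⟩
end

section
/- Let X ⊆ ℝⁿ be a nonempty compact convex set containing 0, f : ℝⁿ → ℝᵍ continuously differentiable with f(0) = 0. Define the diagonal matrix Γ ∈ ℝ^{n×n} with Γ_{jj} := max_{x ∈ X} √(n · Σ_{i=1}^{g} (∂f_i/∂x_j(x))²). Then for all x ∈ X: ⟨f(x), f(x)⟩ ≤ xᵀ Γᵀ Γ x. -/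
/-- Quadratic boundedness: if `f(0) = 0` and `Γ` is the diagonal matrix with
`Γ_{jj} = max_{x∈X} √(n ∑ᵢ (∂fᵢ/∂xⱼ(x))²)`, then `⟨f(x), f(x)⟩ ≤ xᵀΓᵀΓx` on `X`. -/
theorem stmt_11 {n g : ℕ} (X : Set (Fin n → ℝ)) (hne : X.Nonempty)
    (hcomp : IsCompact X) (hConv : Convex ℝ X) (h0 : (0 : Fin n → ℝ) ∈ X)
    (f : (Fin n → ℝ) → Fin g → ℝ) (hf : ContDiffOn ℝ 1 f X)
    (hf0 : f 0 = 0) (Γ : Fin n → ℝ)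
    (hΓ : ∀ j, IsGreatest ((fun x => Real.sqrt ((n : ℝ) * ∑ i,
        (fderivWithin ℝ f X x (Pi.single j 1) i)^2)) '' X) (Γ j)) :
    ∀ x ∈ X, ∑ i, (f x i)^2 ≤ ∑ j, (Γ j * x j)^2 := by
  intro x hx
  have hdiff : DifferentiableOn ℝ f X := hf.differentiableOn one_ne_zero
  -- the bound on partial derivatives at every point of X
  have hbound : ∀ z ∈ X, ∀ j,
      (n : ℝ) * ∑ i, (fderivWithin ℝ f X z (Pi.single j 1) i)^2 ≤ (Γ j)^2 := by
    intro z hz j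
    have h1 : Real.sqrt ((n : ℝ) * ∑ i, (fderivWithin ℝ f X z (Pi.single j 1) i)^2) ≤ Γ j :=
      (hΓ j).2 ⟨z, hz, rfl⟩
    have h2 : (0:ℝ) ≤ (n : ℝ) * ∑ i, (fderivWithin ℝ f X z (Pi.single j 1) i)^2 := by
      positivity
    calc (n : ℝ) * ∑ i, (fderivWithin ℝ f X z (Pi.single j 1) i)^2
        = (Real.sqrt ((n : ℝ) * ∑ i, (fderivWithin ℝ f X z (Pi.single j 1) i)^2))^2 :=
          (Real.sq_sqrt h2).symm
      _ ≤ (Γ j)^2 := pow_le_pow_left₀ (Real.sqrt_nonneg _) h1 2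
  -- key pointwise estimate: for z ∈ X, ‖Df(z) x‖² ≤ ∑ⱼ (Γⱼ xⱼ)²
  have hL : ∀ z ∈ X, ∑ i, (fderivWithin ℝ f X z x i)^2 ≤ ∑ j, (Γ j * x j)^2 := by
    intro z hz
    set L := fderivWithin ℝ f X z with hLdef
    have hxrep : L x = ∑ j, x j • L (Pi.single j 1) := by
      have : x = ∑ j, x j • (Pi.single j 1 : Fin n → ℝ) := by
        funext k
        simp [Finset.sum_apply, Pi.single_apply]
      conv_lhs => rw [this]
      rw [map_sum]
      simp
    have hrep : ∀ i, L x i = ∑ j, x j * L (Pi.single j 1) i := by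
      intro i
      rw [hxrep]
      simp [Finset.sum_apply]
    calc ∑ i, (L x i)^2
        ≤ ∑ i, ((n:ℝ) * ∑ j, (x j * L (Pi.single j 1) i)^2) := by
          refine Finset.sum_le_sum fun i _ => ?_
          rw [hrep i]
          have := sq_sum_le_card_mul_sum_sq (s := (Finset.univ : Finset (Fin n)))
            (f := fun j => x j * L (Pi.single j 1) i)
          simpa using this
      _ = ∑ j, (x j)^2 * ((n:ℝ) * ∑ i, (L (Pi.single j 1) i)^2) := by
          simp_rw [Finset.mul_sum]
          rw [Finset.sum_comm]
          exact Finset.sum_congr rfl fun j _ => Finset.sum_congr rfl fun i _ => by ring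
      _ ≤ ∑ j, (x j)^2 * (Γ j)^2 := by
          refine Finset.sum_le_sum fun j _ => ?_
          exact mul_le_mul_of_nonneg_left (hbound z hz j) (sq_nonneg _)
      _ = ∑ j, (Γ j * x j)^2 := by
          congr 1; funext j; ring
  -- the path t ↦ t • x stays in X
  have hpath : ∀ t ∈ Set.Icc (0:ℝ) 1, t • x ∈ X := by
    intro t ht
    have := hConv hx h0 ht.1 (by linarith [ht.2]) (by ring : t + (1 - t) = 1)
    simpa using this
  -- scalar auxiliary function φ(t) = ⟨f(t•x), f(x)⟩
  set c : Fin g → ℝ := f x with hc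
  set φ : ℝ → ℝ := fun t => ∑ i, f (t • x) i * c i with hφ
  set ψ : ℝ → ℝ := fun t => ∑ i, fderivWithin ℝ f X (t • x) x i * c i with hψ
  have hderiv : ∀ t ∈ Set.Icc (0:ℝ) 1, HasDerivWithinAt φ (ψ t) (Set.Icc 0 1) t := by
    intro t ht
    have hmem : t • x ∈ X := hpath t ht
    have hγ : HasDerivWithinAt (fun s : ℝ => s • x) x (Set.Icc 0 1) t := by
      simpa using ((hasDerivAt_id t).smul_const x).hasDerivWithinAt
    have hF : HasFDerivWithinAt f (fderivWithin ℝ f X (t • x)) X (t • x) :=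
      (hdiff (t • x) hmem).hasFDerivWithinAt
    have hcomp' : HasDerivWithinAt (fun s : ℝ => f (s • x))
        (fderivWithin ℝ f X (t • x) x) (Set.Icc 0 1) t :=
      hF.comp_hasDerivWithinAt t hγ hpath
    refine HasDerivWithinAt.fun_sum fun i _ => ?_
    have hi : HasDerivWithinAt (fun s : ℝ => f (s • x) i)
        (fderivWithin ℝ f X (t • x) x i) (Set.Icc 0 1) t := by
      have := (ContinuousLinearMap.proj (R := ℝ) (φ := fun _ : Fin g => ℝ)
        i).hasFDerivAt.comp_hasDerivWithinAt t hcomp'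
      exact this
    exact hi.mul_const (c i)
  -- bound on ψ
  set S : ℝ := ∑ i, (f x i)^2 with hS
  set B : ℝ := ∑ j, (Γ j * x j)^2 with hB
  have hS0 : 0 ≤ S := Finset.sum_nonneg fun i _ => sq_nonneg _
  have hB0 : 0 ≤ B := Finset.sum_nonneg fun j _ => sq_nonneg _
  have hψbound : ∀ t ∈ Set.Ico (0:ℝ) 1, ‖ψ t‖ ≤ Real.sqrt B * Real.sqrt S := by
    intro t ht
    have hmem : t • x ∈ X := hpath t ⟨ht.1, le_of_lt ht.2⟩
    have hCS : (∑ i, fderivWithin ℝ f X (t • x) x i * c i)^2 ≤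
        (∑ i, (fderivWithin ℝ f X (t • x) x i)^2) * ∑ i, (c i)^2 :=
      Finset.sum_mul_sq_le_sq_mul_sq _ _ _
    have h1 : (∑ i, (fderivWithin ℝ f X (t • x) x i)^2) * ∑ i, (c i)^2 ≤ B * S := by
      refine mul_le_mul_of_nonneg_right (hL _ hmem) ?_
      exact Finset.sum_nonneg fun i _ => sq_nonneg _
    have h2 : (ψ t)^2 ≤ B * S := le_trans hCS h1
    have h3 : |ψ t| ≤ Real.sqrt (B * S) := by
      rw [← Real.sqrt_sq_eq_abs]
      exact Real.sqrt_le_sqrt h2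
    rw [Real.norm_eq_abs]
    calc |ψ t| ≤ Real.sqrt (B * S) := h3
      _ = Real.sqrt B * Real.sqrt S := Real.sqrt_mul hB0 S
  -- mean value inequality
  have hMVT := norm_image_sub_le_of_norm_deriv_le_segment' hderiv hψbound 1
    (by simp : (1:ℝ) ∈ Set.Icc (0:ℝ) 1)
  have hφ1 : φ 1 = S := by
    simp only [hφ, one_smul, hc, hS, pow_two]
  have hφ0 : φ 0 = 0 := by
    simp [hφ, hf0]
  rw [hφ1, hφ0, sub_zero] at hMVT
  have hSle : S ≤ Real.sqrt B * Real.sqrt S := by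
    have : ‖S‖ = S := Real.norm_of_nonneg hS0
    rw [this] at hMVT
    simpa using hMVT
  -- conclude S ≤ B
  rcases eq_or_lt_of_le hS0 with h | h
  · rw [hS] at h; rw [hB] at hB0; linarith [hB0, h]
  · have hsqrtS : Real.sqrt S > 0 := Real.sqrt_pos.mpr h
    have hS_eq : S = Real.sqrt S * Real.sqrt S := (Real.mul_self_sqrt hS0).symm
    have : Real.sqrt S ≤ Real.sqrt B := by
      have := hSle
      rw [hS_eq] at this
      exact le_of_mul_le_mul_right (by linarith [this]) hsqrtS
    have := mul_le_mul this this (Real.sqrt_nonneg S) (Real.sqrt_nonneg B)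
    rw [Real.mul_self_sqrt hS0, Real.mul_self_sqrt hB0] at this
    exact this
end

section
/- Suppose f : ℝⁿ → ℝⁿ satisfies the quadratic inner-boundedness condition with constants γ_{q1}, γ_{q2} ∈ ℝ: ‖f(x) - f(x̂)‖₂² ≤ γ_{q1}‖x - x̂‖₂² + γ_{q2}⟨f(x) - f(x̂), x - x̂⟩ for all x, x̂ in a set Ω containing at least two distinct points. Then f is Lipschitz continuous on Ω with constant γ_l = √(2γ_{q1} + |γ_{q2}|²), and necessarily 2γ_{q1} + |γ_{q2}|² ≥ 0. -/
lemma qib_key {n : ℕ} (u v : Fin n → ℝ) (γq1 γq2 : ℝ)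
    (h : ∑ i, (u i)^2 ≤ γq1 * (∑ j, (v j)^2) + γq2 * ∑ i, u i * v i) :
    ∑ i, (u i)^2 ≤ (2 * γq1 + |γq2|^2) * ∑ j, (v j)^2 := by
  set A := ∑ i, (u i)^2 with hA
  set B := ∑ j, (v j)^2 with hB
  set S := ∑ i, u i * v i with hS
  have hA0 : 0 ≤ A := Finset.sum_nonneg fun i _ => sq_nonneg _
  have hB0 : 0 ≤ B := Finset.sum_nonneg fun i _ => sq_nonneg _
  have hcs : S^2 ≤ A * B := by
    simpa [hA, hB, hS] using Finset.sum_mul_sq_le_sq_mul_sq Finset.univ u v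
  have habs : |S| ≤ Real.sqrt A * Real.sqrt B := by
    have := Real.sqrt_le_sqrt hcs
    rwa [Real.sqrt_sq_eq_abs, Real.sqrt_mul hA0] at this
  have h2 : γq2 * S ≤ |γq2| * (Real.sqrt A * Real.sqrt B) := by
    calc γq2 * S ≤ |γq2 * S| := le_abs_self _
      _ = |γq2| * |S| := abs_mul _ _
      _ ≤ |γq2| * (Real.sqrt A * Real.sqrt B) :=
          mul_le_mul_of_nonneg_left habs (abs_nonneg _)
  have hamgm : 2 * (Real.sqrt A * (|γq2| * Real.sqrt B)) ≤
      (Real.sqrt A)^2 + (|γq2| * Real.sqrt B)^2 := by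
    have := two_mul_le_add_sq (Real.sqrt A) (|γq2| * Real.sqrt B)
    linarith [this]
  have hsqA : (Real.sqrt A)^2 = A := Real.sq_sqrt hA0
  have hsqB : (Real.sqrt B)^2 = B := Real.sq_sqrt hB0
  have h3 : 2 * (γq2 * S) ≤ A + |γq2|^2 * B := by
    have : (|γq2| * Real.sqrt B)^2 = |γq2|^2 * B := by
      rw [mul_pow, hsqB]
    nlinarith [h2, hamgm]
  nlinarith [h, h3]

/-- QIB implies Lipschitz: if `f` satisfies
`‖f(x)-f(x̂)‖² ≤ γ_{q1}‖x-x̂‖² + γ_{q2}⟨f(x)-f(x̂), x-x̂⟩` on a set `Ω` with at least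
two distinct points, then `2γ_{q1} + |γ_{q2}|² ≥ 0` and `f` is Lipschitz on `Ω` with
constant `√(2γ_{q1} + |γ_{q2}|²)`. -/
theorem stmt_13 {n : ℕ} (Ω : Set (Fin n → ℝ))
    (htwo : ∃ a ∈ Ω, ∃ b ∈ Ω, a ≠ b)
    (f : (Fin n → ℝ) → Fin n → ℝ) (γq1 γq2 : ℝ)
    (hqib : ∀ x ∈ Ω, ∀ xh ∈ Ω,
      ∑ i, (f x i - f xh i)^2 ≤
        γq1 * (∑ j, (x j - xh j)^2) +
        γq2 * ∑ i, (f x i - f xh i) * (x i - xh i)) :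
    0 ≤ 2 * γq1 + |γq2|^2 ∧
    ∀ x ∈ Ω, ∀ xh ∈ Ω,
      Real.sqrt (∑ i, (f x i - f xh i)^2) ≤
        Real.sqrt (2 * γq1 + |γq2|^2) * Real.sqrt (∑ j, (x j - xh j)^2) := by
  have key : ∀ x ∈ Ω, ∀ xh ∈ Ω,
      ∑ i, (f x i - f xh i)^2 ≤ (2 * γq1 + |γq2|^2) * ∑ j, (x j - xh j)^2 :=
    fun x hx xh hxh =>
      qib_key (fun i => f x i - f xh i) (fun j => x j - xh j) γq1 γq2 (hqib x hx xh hxh)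
  obtain ⟨a, ha, b, hb, hab⟩ := htwo
  have hBpos : 0 < ∑ j, (a j - b j)^2 := by
    have hne : ∃ j, a j ≠ b j := by
      by_contra h
      push_neg at h
      exact hab (funext h)
    obtain ⟨j, hj⟩ := hne
    exact Finset.sum_pos' (fun i _ => sq_nonneg _) ⟨j, Finset.mem_univ j, by
      have : a j - b j ≠ 0 := sub_ne_zero.mpr hj
      positivity⟩
  have hc : 0 ≤ 2 * γq1 + |γq2|^2 := by
    have hA0 : 0 ≤ ∑ i, (f a i - f b i)^2 := Finset.sum_nonneg fun i _ => sq_nonneg _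
    have := key a ha b hb
    nlinarith [this]
  refine ⟨hc, fun x hx xh hxh => ?_⟩
  have h := key x hx xh hxh
  calc Real.sqrt (∑ i, (f x i - f xh i)^2)
      ≤ Real.sqrt ((2 * γq1 + |γq2|^2) * ∑ j, (x j - xh j)^2) := Real.sqrt_le_sqrt h
    _ = Real.sqrt (2 * γq1 + |γq2|^2) * Real.sqrt (∑ j, (x j - xh j)^2) :=
        Real.sqrt_mul hc _
end
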